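/- Explicit self-dual curves: let p, q be coprime positive integers and θ := πp/q. Let β : ℝ → ℝ be C¹ with |β(t)| < π/4 for all t and β(t + θ) = −β(t), and let ρ : ℝ → ℝ be C¹ with ρ'(t) = (β'(t) + 1)·tan(2β(t)) for all t. Define Γ : ℝ → ℝ³ by Γ(t) = (e^{ρ(t)} cos(t + β(t) − θ), e^{ρ(t)} sin(t + β(t) − θ), 1) (a curve given in polar coordinates by angle t + β(t) − πp/q and radius e^{ρ(t)}). Then Γ is projectively self-dual with shift θ: there exists a linear equivalence f : ℝ³ ≃ (ℝ³)* such that for every t the functional f(Γ(t)) vanishes on Γ(t + θ) and on Γ'(t + θ). (One may take f(x)(y) = y₁(x₁cos θ − x₂sin θ) + y₂(x₁sin θ + x₂cos θ) − λ x₃y₃ with λ = e^{ρ(0)+ρ(θ)}cos(2β(0)) > 0.) -/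

import Mathlib

set_option maxHeartbeats 1600000 in
/-- Explicit self-dual curves: the curve with polar coordinates
`(t + β(t) − πp/q, e^{ρ(t)})`, where `β(t+θ) = −β(t)` and `ρ' = (β'+1)tan(2β)`,
is projectively self-dual with shift `θ = πp/q`. -/
theorem stmt_16 (p q : ℕ) (hp : 0 < p) (hq : 0 < q) (hpq : Nat.Coprime p q)
    (θ : ℝ) (hθ : θ = Real.pi * p / q)
    (β : ℝ → ℝ) (hβ : ContDiff ℝ 1 β)
    (hβbd : ∀ t : ℝ, |β t| < Real.pi / 4)
    (hβanti : ∀ t : ℝ, β (t + θ) = -β t)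
    (ρ : ℝ → ℝ) (hρ : ContDiff ℝ 1 ρ)
    (hρ' : ∀ t : ℝ, deriv ρ t = (deriv β t + 1) * Real.tan (2 * β t))
    (Γ : ℝ → Fin 3 → ℝ)
    (hΓ : ∀ t : ℝ, Γ t = ![Real.exp (ρ t) * Real.cos (t + β t - θ),
                           Real.exp (ρ t) * Real.sin (t + β t - θ), 1]) :
    ∃ f : (Fin 3 → ℝ) ≃ₗ[ℝ] Module.Dual ℝ (Fin 3 → ℝ),
      ∀ t : ℝ, f (Γ t) (Γ (t + θ)) = 0 ∧ f (Γ t) (deriv Γ (t + θ)) = 0 := by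
  have hβd : Differentiable ℝ β := hβ.differentiable one_ne_zero
  have hρd : Differentiable ℝ ρ := hρ.differentiable one_ne_zero
  have hcos2 : ∀ t : ℝ, 0 < Real.cos (2 * β t) := by
    intro t
    apply Real.cos_pos_of_mem_Ioo
    have h := abs_lt.mp (hβbd t)
    constructor
    · linarith [h.1]
    · linarith [h.2]
  have hβθ' : ∀ t : ℝ, deriv β (t + θ) = -deriv β t := by
    intro t
    have h1 : deriv (fun s => β (s + θ)) t = deriv β (t + θ) := deriv_comp_add_const β θ t
    have h2 : (fun s => β (s + θ)) = fun s => -β s := funext hβanti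
    rw [h2, deriv.fun_neg] at h1
    linarith
  -- the quantity e^{ρ(t)+ρ(t+θ)} cos(2β(t)) is constant
  have hgd : ∀ t : ℝ, HasDerivAt
      (fun t => Real.exp (ρ t + ρ (t + θ)) * Real.cos (2 * β t)) 0 t := by
    intro t
    have hρ1 : HasDerivAt ρ (deriv ρ t) t := (hρd t).hasDerivAt
    have hρ2 : HasDerivAt (fun s => ρ (s + θ)) (deriv ρ (t + θ)) t := by
      have h := (hρd (t + θ)).hasDerivAt.comp t ((hasDerivAt_id t).add_const θ)
      simp only [mul_one] at h
      exact h
    have hβ1 : HasDerivAt β (deriv β t) t := (hβd t).hasDerivAt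
    have h1 : HasDerivAt (fun s => Real.exp (ρ s + ρ (s + θ)))
        (Real.exp (ρ t + ρ (t + θ)) * (deriv ρ t + deriv ρ (t + θ))) t := (hρ1.add hρ2).exp
    have h2 : HasDerivAt (fun s => Real.cos (2 * β s))
        (-Real.sin (2 * β t) * (2 * deriv β t)) t := by
      simpa [mul_comm] using ((hβ1.const_mul 2).cos)
    have h3 : HasDerivAt (fun t => Real.exp (ρ t + ρ (t + θ)) * Real.cos (2 * β t)) _ t :=
      h1.mul h2
    convert h3 using 1
    rw [hρ' t, hρ' (t + θ), hβθ' t, hβanti t]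
    have hc := (hcos2 t).ne'
    have he : (2 : ℝ) * -β t = -(2 * β t) := by ring
    rw [he, Real.tan_neg, Real.tan_eq_sin_div_cos]
    field_simp
    ring
  have hgconst : ∀ t : ℝ, Real.exp (ρ t + ρ (t + θ)) * Real.cos (2 * β t)
      = Real.exp (ρ 0 + ρ (0 + θ)) * Real.cos (2 * β 0) := fun t =>
    is_const_of_deriv_eq_zero (fun x => (hgd x).differentiableAt)
      (fun x => (hgd x).deriv) t 0
  set L : ℝ := Real.exp (ρ 0 + ρ (0 + θ)) * Real.cos (2 * β 0) with hLdef
  have hL : L ≠ 0 := (mul_pos (Real.exp_pos _) (hcos2 0)).ne'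
  -- derivative of the curve
  have hΓeq : Γ = fun t => ![Real.exp (ρ t) * Real.cos (t + β t - θ),
      Real.exp (ρ t) * Real.sin (t + β t - θ), 1] := funext hΓ
  have hΓder : ∀ s : ℝ, HasDerivAt Γ
      (![Real.exp (ρ s) * (deriv ρ s * Real.cos (s + β s - θ)
            - (1 + deriv β s) * Real.sin (s + β s - θ)),
         Real.exp (ρ s) * (deriv ρ s * Real.sin (s + β s - θ)
            + (1 + deriv β s) * Real.cos (s + β s - θ)), 0]) s := by
    intro s
    rw [hΓeq]
    refine hasDerivAt_pi.mpr fun i => ?_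
    have hψ : HasDerivAt (fun t => t + β t - θ) (1 + deriv β s) s :=
      ((hasDerivAt_id s).add (hβd s).hasDerivAt).sub_const θ
    have hexp : HasDerivAt (fun t => Real.exp (ρ t)) (Real.exp (ρ s) * deriv ρ s) s :=
      (hρd s).hasDerivAt.exp
    fin_cases i
    · simp only [Matrix.cons_val_zero]
      have h := hexp.mul hψ.cos
      refine h.congr_deriv ?_
      norm_num
      ring
    · simp only [Matrix.cons_val_one, Matrix.head_cons]
      have h := hexp.mul hψ.sin
      refine h.congr_deriv ?_
      norm_num
      ring
    · simpa using hasDerivAt_const s (1 : ℝ)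
  -- trig addition keys
  have key1 : ∀ u v : ℝ,
      (Real.cos u * Real.cos θ - Real.sin u * Real.sin θ) * Real.cos v
      + (Real.cos u * Real.sin θ + Real.sin u * Real.cos θ) * Real.sin v
      = Real.cos (u + θ - v) := by
    intro u v
    rw [Real.cos_sub, Real.cos_add, Real.sin_add]
    ring
  have key2 : ∀ u v : ℝ,
      (Real.cos u * Real.cos θ - Real.sin u * Real.sin θ) * Real.sin v
      - (Real.cos u * Real.sin θ + Real.sin u * Real.cos θ) * Real.cos v
      = -Real.sin (u + θ - v) := by
    intro u v
    rw [Real.sin_sub, Real.sin_add, Real.cos_add]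
    ring
  refine ⟨{
      toFun := fun x =>
        (x 0 * Real.cos θ - x 1 * Real.sin θ) • (LinearMap.proj 0 : (Fin 3 → ℝ) →ₗ[ℝ] ℝ)
        + (x 0 * Real.sin θ + x 1 * Real.cos θ) • (LinearMap.proj 1 : (Fin 3 → ℝ) →ₗ[ℝ] ℝ)
        + (-(L * x 2)) • (LinearMap.proj 2 : (Fin 3 → ℝ) →ₗ[ℝ] ℝ)
      map_add' := by
        intro x y
        refine LinearMap.ext fun v => ?_
        simp only [Pi.add_apply, LinearMap.add_apply, LinearMap.smul_apply,
          LinearMap.proj_apply, smul_eq_mul]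
        ring
      map_smul' := by
        intro r x
        refine LinearMap.ext fun v => ?_
        simp only [Pi.smul_apply, smul_eq_mul, LinearMap.add_apply, LinearMap.smul_apply,
          LinearMap.proj_apply, RingHom.id_apply]
        ring
      invFun := fun φ =>
        ![φ (fun j => if (0 : Fin 3) = j then 1 else 0) * Real.cos θ
            + φ (fun j => if (1 : Fin 3) = j then 1 else 0) * Real.sin θ,
          -(φ (fun j => if (0 : Fin 3) = j then 1 else 0)) * Real.sin θ
            + φ (fun j => if (1 : Fin 3) = j then 1 else 0) * Real.cos θ,
          -(φ (fun j => if (2 : Fin 3) = j then 1 else 0)) / L]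
      left_inv := by
        intro x
        funext i
        fin_cases i
        · simp only [LinearMap.add_apply, LinearMap.smul_apply, LinearMap.proj_apply,
            smul_eq_mul, Matrix.cons_val_zero]
          norm_num [Fin.ext_iff]
          linear_combination x 0 * Real.sin_sq_add_cos_sq θ
        · simp only [LinearMap.add_apply, LinearMap.smul_apply, LinearMap.proj_apply,
            smul_eq_mul, Matrix.cons_val_one, Matrix.head_cons]
          norm_num [Fin.ext_iff]
          linear_combination x 1 * Real.sin_sq_add_cos_sq θ
        · simp only [LinearMap.add_apply, LinearMap.smul_apply, LinearMap.proj_apply,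
            smul_eq_mul]
          norm_num [Fin.ext_iff]
          field_simp
          rfl
      right_inv := by
        intro φ
        refine LinearMap.ext fun v => ?_
        have hv := LinearMap.pi_apply_eq_sum_univ φ v
        simp only [Fin.sum_univ_three, smul_eq_mul] at hv
        simp only [LinearMap.add_apply, LinearMap.smul_apply, LinearMap.proj_apply,
          smul_eq_mul, Matrix.cons_val_zero, Matrix.cons_val_one, Matrix.head_cons,
          Matrix.cons_val_two, Matrix.tail_cons]
        rw [hv]
        have h3 : -(L * (-(φ (fun j => if (2 : Fin 3) = j then 1 else 0)) / L))
            = φ (fun j => if (2 : Fin 3) = j then 1 else 0) := by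
          field_simp
        linear_combination (φ (fun j => if (0 : Fin 3) = j then 1 else 0) * v 0
            + φ (fun j => if (1 : Fin 3) = j then 1 else 0) * v 1) * Real.sin_sq_add_cos_sq θ
          + v 2 * h3
    }, ?_⟩
  intro t
  have hgt : Real.exp (ρ t) * Real.exp (ρ (t + θ)) * Real.cos (2 * β t) = L := by
    rw [← Real.exp_add]
    exact hgconst t
  constructor
  · simp only [LinearEquiv.coe_mk, LinearMap.coe_mk, AddHom.coe_mk, LinearMap.add_apply,
      LinearMap.smul_apply, LinearMap.proj_apply, smul_eq_mul, hΓ t, hΓ (t + θ),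
      Matrix.cons_val_zero, Matrix.cons_val_one, Matrix.head_cons]
    rw [hβanti t]
    have hk := key1 (t + β t - θ) (t + θ + -β t - θ)
    have harg : t + β t - θ + θ - (t + θ + -β t - θ) = 2 * β t := by ring
    rw [harg] at hk
    norm_num [Matrix.cons_val_two, Matrix.tail_cons, Matrix.head_cons]
    linear_combination Real.exp (ρ t) * Real.exp (ρ (t + θ)) * hk + hgt
  · rw [(hΓder (t + θ)).deriv]
    simp only [LinearEquiv.coe_mk, LinearMap.coe_mk, AddHom.coe_mk, LinearMap.add_apply,
      LinearMap.smul_apply, LinearMap.proj_apply, smul_eq_mul, hΓ t,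
      Matrix.cons_val_zero, Matrix.cons_val_one, Matrix.head_cons]
    rw [hβanti t]
    have hk1 := key1 (t + β t - θ) (t + θ + -β t - θ)
    have hk2 := key2 (t + β t - θ) (t + θ + -β t - θ)
    have harg : t + β t - θ + θ - (t + θ + -β t - θ) = 2 * β t := by ring
    rw [harg] at hk1 hk2
    have h0 : deriv ρ (t + θ) * Real.cos (2 * β t)
        + (1 + deriv β (t + θ)) * Real.sin (2 * β t) = 0 := by
      rw [hρ' (t + θ), hβanti t]
      have he : (2 : ℝ) * -β t = -(2 * β t) := by ring
      rw [he, Real.tan_neg, Real.tan_eq_sin_div_cos]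
      have hc := (hcos2 t).ne'
      field_simp
      ring
    norm_num [Matrix.cons_val_two, Matrix.tail_cons, Matrix.head_cons]
    linear_combination Real.exp (ρ t) * Real.exp (ρ (t + θ))
      * (deriv ρ (t + θ) * hk1 - (1 + deriv β (t + θ)) * hk2 + h0)
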